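/- Let δ ∈ (0, 1/4) and η ∈ [0, 1/2]. Let e₁, e₂ be i.i.d. with distribution Ber(1/2 − √δ) and let b ∼ Ber(1/2) be independent of (e₁, e₂), and set Z = (e₁ + b, e₂ + b) ∈ 𝔽₂². Suppose there exist independent 𝔽₂²-valued random variables X and Y such that X ∼ Ber(1/2 − η)^{⊗2} (i.e., X₁, X₂ are i.i.d. Ber(1/2 − η)) and X + Y has the same distribution as Z (componentwise sum in 𝔽₂). Then η ≥ √δ. -/
import Mathlib


/-- A probability mass function on a finite type: nonnegative, summing to 1. -/
def IsProbDist {X : Type*} [Fintype X] (p : X → ℝ) : Prop :=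
  (∀ x, 0 ≤ p x) ∧ ∑ x, p x = 1

/-- Bernoulli distribution on `𝔽₂`, taking value `1` with probability `α`. -/
noncomputable def bern (α : ℝ) : ZMod 2 → ℝ := fun z => if z = 1 then α else 1 - α

/-- Pushforward of a mass function on a finite type along a map. -/
noncomputable def pushforward {X Y : Type*} [Fintype X] [DecidableEq Y]
    (f : X → Y) (p : X → ℝ) : Y → ℝ :=
  fun y => ∑ x ∈ Finset.univ.filter (fun x => f x = y), p x

/-- The law of `Z = (e₁ + b, e₂ + b) ∈ 𝔽₂²`, where `e₁, e₂` are i.i.d.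
`Ber(1/2 − √δ)` and `b ∼ Ber(1/2)` is independent of `(e₁, e₂)`. -/
noncomputable def pdist (δ : ℝ) : (Fin 2 → ZMod 2) → ℝ :=
  pushforward (fun w : ZMod 2 × ZMod 2 × ZMod 2 => ![w.1 + w.2.2, w.2.1 + w.2.2])
    (fun w => bern (1 / 2 - Real.sqrt δ) w.1 * bern (1 / 2 - Real.sqrt δ) w.2.1
      * bern (1 / 2) w.2.2)

noncomputable def sgn2 : ZMod 2 → ℝ := fun a => if a = 1 then -1 else 1

noncomputable def sgn : (Fin 2 → ZMod 2) → ℝ := fun z => sgn2 (z 0) * sgn2 (z 1)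

lemma pairing {X Y : Type*} [Fintype X] [Fintype Y] [DecidableEq Y]
    (g : Y → ℝ) (f : X → Y) (p : X → ℝ) :
    ∑ y, g y * pushforward f p y = ∑ x, g (f x) * p x := by
  unfold pushforward
  simp_rw [Finset.mul_sum, Finset.sum_filter]
  rw [Finset.sum_comm]
  simp

lemma zmod2_cases (a : ZMod 2) : a = 0 ∨ a = 1 := by revert a; decide

lemma sgn2_add (a b : ZMod 2) : sgn2 (a + b) = sgn2 a * sgn2 b := by
  rcases zmod2_cases a with ha | ha <;> rcases zmod2_cases b with hb | hb <;>
    subst ha <;> subst hb <;> simp [sgn2]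

lemma sum_zmod2 (f : ZMod 2 → ℝ) : ∑ a, f a = f 0 + f 1 := Fin.sum_univ_two f

lemma sum_fun2 (f : (Fin 2 → ZMod 2) → ℝ) :
    ∑ z, f z = f ![0,0] + f ![0,1] + f ![1,0] + f ![1,1] := by
  have huniv : (Finset.univ : Finset (Fin 2 → ZMod 2)) = {![0,0], ![0,1], ![1,0], ![1,1]} := by
    decide
  rw [huniv]
  rw [show ({![0,0], ![0,1], ![1,0], ![1,1]} : Finset (Fin 2 → ZMod 2))
      = insert ![0,0] (insert ![0,1] (insert ![1,0] {![1,1]})) from rfl]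
  rw [Finset.sum_insert (by decide), Finset.sum_insert (by decide),
    Finset.sum_insert (by decide), Finset.sum_singleton]
  ring

/-- If there are independent `X ∼ Ber(1/2 − η)^{⊗2}` and `Y ∼ ν` on `𝔽₂²` with
`X + Y` distributed as `Z = (e₁ + b, e₂ + b)`, then `η ≥ √δ`. -/
theorem no_independent_noise_decomposition (δ η : ℝ)
    (hδ0 : 0 < δ) (hδ1 : δ < 1 / 4) (hη0 : 0 ≤ η) (hη1 : η ≤ 1 / 2)
    (ν : (Fin 2 → ZMod 2) → ℝ) (hν : IsProbDist ν)
    (h : pushforward (fun w : (Fin 2 → ZMod 2) × (Fin 2 → ZMod 2) => w.1 + w.2)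
          (fun w => (bern (1 / 2 - η) (w.1 0) * bern (1 / 2 - η) (w.1 1)) * ν w.2)
        = pdist δ) :
    Real.sqrt δ ≤ η := by
  have hs0 : 0 ≤ Real.sqrt δ := Real.sqrt_nonneg δ
  have hs2 : Real.sqrt δ ^ 2 = δ := Real.sq_sqrt hδ0.le
  have h01 : ((0 : ZMod 2) = 1) = False := by simp
  have key : ∑ z, sgn z *
      (pushforward (fun w : (Fin 2 → ZMod 2) × (Fin 2 → ZMod 2) => w.1 + w.2)
        (fun w => (bern (1 / 2 - η) (w.1 0) * bern (1 / 2 - η) (w.1 1)) * ν w.2)) z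
      = ∑ z, sgn z * pdist δ z := by rw [h]
  -- LHS
  have hL : ∑ z, sgn z *
      (pushforward (fun w : (Fin 2 → ZMod 2) × (Fin 2 → ZMod 2) => w.1 + w.2)
        (fun w => (bern (1 / 2 - η) (w.1 0) * bern (1 / 2 - η) (w.1 1)) * ν w.2)) z
      = (2 * η) ^ 2 * ∑ y, sgn y * ν y := by
    rw [pairing, Fintype.sum_prod_type]
    have hmul : ∀ x y : Fin 2 → ZMod 2, sgn (x + y) = sgn x * sgn y := by
      intro x y; simp only [sgn, Pi.add_apply, sgn2_add]; ring
    simp_rw [hmul]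
    have hx : ∑ x : Fin 2 → ZMod 2,
        sgn x * (bern (1 / 2 - η) (x 0) * bern (1 / 2 - η) (x 1)) = (2 * η) ^ 2 := by
      rw [sum_fun2]
      simp [sgn, sgn2, bern, h01]
      ring
    rw [← hx, Finset.sum_mul_sum]
    apply Finset.sum_congr rfl; intro x _
    apply Finset.sum_congr rfl; intro y _
    ring
  -- RHS
  have hR : ∑ z, sgn z * pdist δ z = 4 * δ := by
    unfold pdist
    rw [pairing, Fintype.sum_prod_type]
    simp_rw [Fintype.sum_prod_type]
    have hsplit : ∀ a b c : ZMod 2,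
        sgn ![a + c, b + c] = sgn2 a * sgn2 b := by
      intro a b c
      have hc2 : sgn2 c * sgn2 c = 1 := by
        rcases zmod2_cases c with hc | hc <;> subst hc <;> simp [sgn2, h01] <;> norm_num
      simp only [sgn, Matrix.cons_val_zero, Matrix.cons_val_one, Matrix.head_cons, sgn2_add]
      linear_combination sgn2 a * sgn2 b * hc2
    simp_rw [hsplit]
    simp only [sum_zmod2]
    simp only [sgn2, bern, h01, if_true, if_false, eq_self_iff_true]
    norm_num
    nlinarith [hs2]
  rw [hL, hR] at key
  obtain ⟨hν0, hν1⟩ := hν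
  rw [sum_fun2] at hν1
  have hb : ∑ y, sgn y * ν y ≤ 1 := by
    rw [sum_fun2]
    have h1 := hν0 ![0,0]; have h2 := hν0 ![0,1]
    have h3 := hν0 ![1,0]; have h4 := hν0 ![1,1]
    simp only [sgn, sgn2, bern, h01] at *
    norm_num
    nlinarith
  have hδη : δ ≤ η ^ 2 := by nlinarith [key, hb, sq_nonneg η]
  calc Real.sqrt δ ≤ Real.sqrt (η ^ 2) := Real.sqrt_le_sqrt hδη
    _ = η := Real.sqrt_sq hη0
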